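/- Let k ≥ 2 and t ≥ 2k−3 be integers, and let G be the graph obtained from the complete graph K_k by adding t new vertices, each adjacent to all vertices of K_k (and to no other new vertex). Then G is k-degenerate, and G admits no partition of its vertex set into k−1 parts such that each part induces a forest and any two parts differ in size by at most one. -/

import Mathlib

/-- The graph obtained from `K_k` by adding `t` new vertices, each adjacent to all vertices
of `K_k` and to no other new vertex. -/
def completePlusDominating (k t : ℕ) : SimpleGraph (Fin k ⊕ Fin t) where
  Adj u v :=
    match u, v with
    | Sum.inl a, Sum.inl b => a ≠ b
    | Sum.inl _, Sum.inr _ => True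
    | Sum.inr _, Sum.inl _ => True
    | Sum.inr _, Sum.inr _ => False
  symm := by
    refine ⟨fun u v h => ?_⟩
    cases u <;> cases v <;> simp_all <;> exact fun e => h e.symm
  loopless := by
    refine ⟨fun u => ?_⟩
    cases u <;> simp

lemma tri_not_acyclic {V : Type*} {G : SimpleGraph V} (h : G.IsAcyclic) {a b c : V}
    (hab : G.Adj a b) (hbc : G.Adj b c) (hca : G.Adj c a) : False := by
  refine h (.cons hab (.cons hbc (.cons hca .nil))) ?_
  simp [SimpleGraph.Walk.isCycle_def, SimpleGraph.Walk.isTrail_def, List.Nodup, Sym2.eq_iff,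
    hab.ne, hbc.ne, hca.ne, hab.ne', hbc.ne', hca.ne']

open Finset Classical in
/-- For k ≥ 2 and t ≥ 2k−3, the graph obtained from K_k by adding t vertices each adjacent
to all of K_k is k-degenerate, but has no equitable partition into k−1 induced forests. -/
theorem completePlusDominating_k_degenerate_not_equitable (k t : ℕ)
    (hk : 2 ≤ k) (ht : 2 * k - 3 ≤ t) :
    (∀ s : Finset (Fin k ⊕ Fin t), s.Nonempty →
      ∃ v ∈ s, (s.filter (fun u => (completePlusDominating k t).Adj v u)).card ≤ k) ∧
    ¬ ∃ P : Fin (k - 1) → Finset (Fin k ⊕ Fin t),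
        (∀ v, ∃! i, v ∈ P i) ∧
        (∀ i, ((completePlusDominating k t).induce (↑(P i) : Set (Fin k ⊕ Fin t))).IsAcyclic) ∧
        (∀ i j, ((P i).card : ℤ) - (P j).card ≤ 1) := by
  constructor
  · -- degeneracy
    intro s hs
    have key : ∀ v : Fin k ⊕ Fin t, v ∈ s →
        ((∀ u ∈ s, (completePlusDominating k t).Adj v u → u.isLeft) →
          (s.filter (fun u => (completePlusDominating k t).Adj v u)).card ≤ k) := by
      intro v hv hleft
      have hsub : s.filter (fun u => (completePlusDominating k t).Adj v u) ⊆
          (univ : Finset (Fin k)).image Sum.inl := by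
        intro u hu
        rw [mem_filter] at hu
        have := hleft u hu.1 hu.2
        cases u with
        | inl a => simp
        | inr b => simp at this
      calc (s.filter (fun u => (completePlusDominating k t).Adj v u)).card
          ≤ ((univ : Finset (Fin k)).image Sum.inl).card := card_le_card hsub
        _ ≤ k := by
            simpa using (card_image_le (s := (univ : Finset (Fin k))) (f := Sum.inl))
    by_cases hr : ∃ b : Fin t, Sum.inr b ∈ s
    · obtain ⟨b, hb⟩ := hr
      refine ⟨Sum.inr b, hb, key _ hb ?_⟩
      intro u _ hadj
      cases u with
      | inl a => simp
      | inr c => simp [completePlusDominating] at hadj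
    · obtain ⟨v, hv⟩ := hs
      refine ⟨v, hv, key _ hv ?_⟩
      intro u hu _
      cases u with
      | inl a => simp
      | inr c => exact absurd ⟨c, hu⟩ hr
  · rintro ⟨P, hP, hacy, heq⟩
    -- pigeonhole: two vertices of K_k in the same class
    have hcard : Fintype.card (Fin (k - 1)) < Fintype.card (Fin k) := by
      simp; omega
    obtain ⟨a, b, hab, hfab⟩ := Fintype.exists_ne_map_eq_of_card_lt
      (fun a : Fin k => (hP (Sum.inl a)).choose) hcard
    set i₀ := (hP (Sum.inl a)).choose with hi₀
    have ha0 : Sum.inl a ∈ P i₀ := (hP (Sum.inl a)).choose_spec.1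
    have hb0 : Sum.inl b ∈ P i₀ := by rw [hfab]; exact (hP (Sum.inl b)).choose_spec.1
    -- any third vertex in P i₀ gives a triangle
    have hsub : P i₀ ⊆ {Sum.inl a, Sum.inl b} := by
      intro c hc
      by_contra hcn
      simp only [mem_insert, mem_singleton] at hcn
      push_neg at hcn
      obtain ⟨hca, hcb⟩ := hcn
      have hadj1 : (completePlusDominating k t).Adj (Sum.inl a) (Sum.inl b) := by
        simpa [completePlusDominating] using hab
      have hadj2 : (completePlusDominating k t).Adj (Sum.inl b) c := by
        cases c with
        | inl x => simp [completePlusDominating]; rintro rfl; exact hcb rfl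
        | inr x => simp [completePlusDominating]
      have hadj3 : (completePlusDominating k t).Adj c (Sum.inl a) := by
        cases c with
        | inl x => simp [completePlusDominating]; rintro rfl; exact hca rfl
        | inr x => simp [completePlusDominating]
      exact tri_not_acyclic (hacy i₀)
        (a := (⟨Sum.inl a, by simpa using ha0⟩ : (↑(P i₀) : Set (Fin k ⊕ Fin t))))
        (b := ⟨Sum.inl b, by simpa using hb0⟩) (c := ⟨c, by simpa using hc⟩)
        hadj1 hadj2 hadj3
    have hle2 : (P i₀).card ≤ 2 :=
      le_trans (card_le_card hsub) (card_insert_le _ _ |>.trans (by simp))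
    -- each class has card ≤ 3
    have hle3 : ∀ i, (P i).card ≤ 3 := by
      intro i
      have h := heq i i₀
      omega
    -- sum of cards = k + t
    have hsum : ∑ i, (P i).card = k + t := by
      have h1 : (univ : Finset (Fin k ⊕ Fin t)).card =
          ∑ i, ((univ : Finset (Fin k ⊕ Fin t)).filter
            (fun v => (hP v).choose = i)).card := by
        exact card_eq_sum_card_fiberwise (by intro x _; exact mem_univ _)
      have h2 : ∀ i, (univ : Finset (Fin k ⊕ Fin t)).filter
          (fun v => (hP v).choose = i) = P i := by
        intro i
        ext v
        simp only [mem_filter, mem_univ, true_and]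
        constructor
        · rintro rfl; exact (hP v).choose_spec.1
        · intro hv; exact ((hP v).choose_spec.2 i hv).symm ▸ rfl
      simp only [h2] at h1
      rw [← h1]
      simp [Fintype.card_sum]
    -- arithmetic contradiction
    have hsum_le : ∑ i, (P i).card ≤ 2 + 3 * (k - 2) := by
      classical
      have hi₀mem : i₀ ∈ (univ : Finset (Fin (k - 1))) := mem_univ _
      rw [← Finset.sum_erase_add _ _ hi₀mem]
      have h1 : ∑ i ∈ univ.erase i₀, (P i).card ≤ ∑ i ∈ univ.erase i₀, 3 :=
        Finset.sum_le_sum (fun i _ => hle3 i)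
      have h2 : ((univ : Finset (Fin (k - 1))).erase i₀).card = k - 2 := by
        rw [card_erase_of_mem hi₀mem]
        simp; omega
      simp only [Finset.sum_const, smul_eq_mul, h2] at h1
      omega
    omega
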